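/- For every sequence π of distinct keys, the total cost of insertion splaying π starting from the empty tree equals the cost of splaying the sequence π starting from the insertion tree BST(π). -/

import Mathlib

/-- Binary trees with keys at internal nodes. -/
inductive BT (α : Type) where
  | leaf : BT α
  | node : BT α → α → BT α → BT α
deriving DecidableEq

namespace BT

variable {α : Type} [LinearOrder α]

/-- The list of keys of a tree, in symmetric (inorder) order. -/
def keys : BT α → List α
  | leaf => []
  | node l v r => keys l ++ v :: keys r

/-- The number of nodes of a tree. -/
def size : BT α → ℕ
  | leaf => 0
  | node l _ r => size l + size r + 1

/-- The symmetric-order (binary search tree) property. -/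
def IsBST : BT α → Prop
  | leaf => True
  | node l v r => (∀ x ∈ l.keys, x < v) ∧ (∀ x ∈ r.keys, v < x) ∧ l.IsBST ∧ r.IsBST

/-- Preorder of a binary tree: root, then left subtree, then right subtree. -/
def preorder : BT α → List α
  | leaf => []
  | node l v r => v :: (preorder l ++ preorder r)

/-- Postorder of a binary tree: left subtree, right subtree, then root. -/
def postorder : BT α → List α
  | leaf => []
  | node l v r => postorder l ++ postorder r ++ [v]

/-- Reversed preorder: root, then right subtree, then left subtree
(the preorder of the mirror image). -/
def revPreorder : BT α → List α
  | leaf => []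
  | node l v r => v :: (revPreorder r ++ revPreorder l)

/-- Standard leaf insertion into a binary search tree. -/
def insertKey : BT α → α → BT α
  | leaf, x => node leaf x leaf
  | node l v r, x =>
    if x < v then node (insertKey l x) v r
    else if v < x then node l v (insertKey r x)
    else node l v r

/-- The depth (number of edges from the root) of the node with key `x`,
located by binary search. -/
def depthOf : BT α → α → ℕ
  | leaf, _ => 0
  | node l v r, x =>
    if x < v then depthOf l x + 1
    else if v < x then depthOf r x + 1
    else 0

/-- The search path to the key `x`: `false` records a step to a left child,
`true` a step to a right child. -/
def pathTo : BT α → α → List Bool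
  | leaf, _ => []
  | node l v r, x =>
    if x < v then false :: pathTo l x
    else if v < x then true :: pathTo r x
    else []

/-- The left-depth of the node with key `x`: the number of left-child edges
on the path from the root to it. -/
def leftDepthKey : BT α → α → ℕ
  | leaf, _ => 0
  | node l v r, x =>
    if x < v then leftDepthKey l x + 1
    else if v < x then leftDepthKey r x
    else 0

/-- The subtree rooted at the node with key `x` (empty if `x` is absent). -/
def subtreeAt : BT α → α → BT α
  | leaf, _ => leaf
  | node l v r, x =>
    if x < v then subtreeAt l x
    else if v < x then subtreeAt r x
    else node l v r

/-- The key at the root, if any. -/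
def rootKey : BT α → Option α
  | leaf => none
  | node _ v _ => some v

/-- The key of the parent of the node with key `x`, if any. -/
def parentKey : BT α → α → Option α
  | leaf, _ => none
  | node l v r, x =>
    if x < v then (if l.rootKey = some x then some v else l.parentKey x)
    else if v < x then (if r.rootKey = some x then some v else r.parentKey x)
    else none

/-- A step of the context (zipper) describing the search path from the root
to the current subtree: `inL v r` means the current subtree is the left child
of a node with key `v` and right subtree `r`; `inR l v` means it is the right
child of a node with key `v` and left subtree `l`. -/
inductive Ctx (α : Type) where
  | inL : α → BT α → Ctx α
  | inR : BT α → α → Ctx α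

/-- Descend along the search path for `x`, recording the context.
The head of the returned list corresponds to the immediate parent. -/
def descend : BT α → α → List (Ctx α) → List (Ctx α) × BT α
  | leaf, _, acc => (acc, leaf)
  | node l v r, x, acc =>
    if x < v then descend l x (Ctx.inL v r :: acc)
    else if v < x then descend r x (Ctx.inR l v :: acc)
    else (acc, node l v r)

/-- Reattach a subtree into its context, with no rotations. -/
def rebuild : BT α → List (Ctx α) → BT α
  | t, [] => t
  | t, Ctx.inL v r :: cs => rebuild (node t v r) cs
  | t, Ctx.inR l v :: cs => rebuild (node l v t) cs

/-- Bottom-up splay steps: repeatedly apply zig / zig-zig / zig-zag steps to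
the current subtree (rooted at the node being splayed) until the context is
exhausted. -/
def splayLoop : BT α → List (Ctx α) → BT α
  | t, [] => t
  | node a x b, [Ctx.inL v r] => node a x (node b v r)          -- zig
  | node a x b, [Ctx.inR l v] => node (node l v a) x b          -- zig
  | node a x b, Ctx.inL p pr :: Ctx.inL g gr :: cs =>           -- zig-zig
      splayLoop (node a x (node b p (node pr g gr))) cs
  | node a x b, Ctx.inL p pr :: Ctx.inR gl g :: cs =>           -- zig-zag
      splayLoop (node (node gl g a) x (node b p pr)) cs
  | node a x b, Ctx.inR pl p :: Ctx.inR gl g :: cs =>           -- zig-zig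
      splayLoop (node (node (node gl g pl) p a) x b) cs
  | node a x b, Ctx.inR pl p :: Ctx.inL g gr :: cs =>           -- zig-zag
      splayLoop (node (node pl p a) x (node b g gr)) cs
  | leaf, cs => rebuild leaf cs   -- unreachable when the splayed key is present

/-- Splaying the key `x`: if `x` occurs in the tree, bring its node to the
root by bottom-up splay steps; otherwise leave the tree unchanged. -/
def splay (x : α) (t : BT α) : BT α :=
  match descend t x [] with
  | (_, leaf) => t
  | (cs, found) => splayLoop found cs

/-- `α`-weight-balance in the sense of Nievergelt–Reingold:
at each node, `min(|L|,|R|) + 1 ≥ α * (|x| + 1)`. -/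
def WeightBalanced (a : ℝ) : BT α → Prop
  | leaf => True
  | node l _ r =>
      (min l.size r.size + 1 : ℝ) ≥ a * ((l.size + r.size + 1 : ℕ) + 1 : ℝ) ∧
      WeightBalanced a l ∧ WeightBalanced a r

/-- The rank of `x` in `t`: the number of keys of `t` that are `≤ x`. -/
def rank (t : BT α) (x : α) : ℕ := (t.keys.filter (fun y => y ≤ x)).length

end BT

section Defs

variable {α : Type} [LinearOrder α]

/-- The insertion tree of a sequence: leaf-insert the keys in order. -/
def bstOf (π : List α) : BT α := π.foldl BT.insertKey BT.leaf

/-- `q` is a sub-root: a node of `t` not yet touched whose parent is touched,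
where `touched` is the list of touched keys. -/
def IsSubRoot (t : BT α) (touched : List α) (q : α) : Prop :=
  q ∈ t.keys ∧ q ∉ touched ∧ ∃ p, t.parentKey q = some p ∧ p ∈ touched

/-- π avoids the pattern (2,3,1). -/
def Avoids231 (π : List α) : Prop :=
  ¬ ∃ i j k : Fin π.length, i < j ∧ j < k ∧ π.get k < π.get i ∧ π.get i < π.get j

/-- π avoids the pattern (3,1,2). -/
def Avoids312 (π : List α) : Prop :=
  ¬ ∃ i j k : Fin π.length, i < j ∧ j < k ∧ π.get j < π.get k ∧ π.get k < π.get i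

/-- π avoids the pattern (2,1,3). -/
def Avoids213 (π : List α) : Prop :=
  ¬ ∃ i j k : Fin π.length, i < j ∧ j < k ∧ π.get j < π.get i ∧ π.get i < π.get k

/-- π contains a strictly decreasing subsequence of length `k`. -/
def HasDecreasingSubseq (π : List α) (k : ℕ) : Prop :=
  ∃ s : List α, s.Sublist π ∧ s.length = k ∧ s.Chain' (· > ·)

/-- Splay the keys of a list in order, starting from `t`. -/
def splaySeq (π : List α) (t : BT α) : BT α := π.foldl (fun s x => BT.splay x s) t

/-- The cost of splaying a sequence of keys starting from `t`:
each splay costs the current depth of the requested key plus one. -/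
def splayCost : BT α → List α → ℕ
  | _, [] => 0
  | t, x :: xs => (t.depthOf x + 1) + splayCost (BT.splay x t) xs

/-- The cost of insertion splaying a sequence of keys starting from `t`:
each key is leaf-inserted, then the new node is splayed, at a cost of
its depth after insertion plus one. -/
def insertSplayCost : BT α → List α → ℕ
  | _, [] => 0
  | t, x :: xs =>
    ((t.insertKey x).depthOf x + 1) + insertSplayCost (BT.splay x (t.insertKey x)) xs

/-- `DF rk xs` = Σ_{i≥2} log₂(|rk(x_i) − rk(x_{i−1})| + 1). -/
noncomputable def DF (rk : α → ℕ) (xs : List α) : ℝ :=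
  ((xs.zip xs.tail).map
    (fun p => Real.logb 2 (|(rk p.2 : ℝ) - (rk p.1 : ℝ)| + 1))).sum

/-- The rank of `x` within the sequence `σ` itself. -/
def rankIn (σ : List α) (x : α) : ℕ := (σ.filter (fun y => y ≤ x)).length

/-- The dynamic-finger sum of a sequence, with ranks computed in the
sequence itself. -/
noncomputable def DFseq (σ : List α) : ℝ := DF (rankIn σ) σ

end Defs

section SplayProof

open BT
set_option linter.unusedSectionVars false

variable {α : Type} [LinearOrder α]

/-- Optional lower bound. -/
def oLt : Option α → α → Prop
  | none, _ => True
  | some l, x => l < x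

/-- Optional upper bound. -/
def Lto : α → Option α → Prop
  | _, none => True
  | x, some h => x < h

@[simp] lemma oLt_none {x : α} : oLt none x := trivial
@[simp] lemma oLt_some {l x : α} : oLt (some l) x ↔ l < x := Iff.rfl
@[simp] lemma Lto_none {x : α} : Lto x none := trivial
@[simp] lemma Lto_some {x h : α} : Lto x (some h) ↔ x < h := Iff.rfl

lemma oLt_of_lt {lo : Option α} {v k : α} (h : oLt lo v) (hvk : v < k) : oLt lo k := by
  cases lo with
  | none => trivial
  | some l => exact lt_trans h hvk

lemma Lto_of_lt {hi : Option α} {v k : α} (hkv : k < v) (h : Lto v hi) : Lto k hi := by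
  cases hi with
  | none => trivial
  | some u => exact lt_trans hkv h

/-- All keys of `t` lie strictly between the optional bounds. -/
def KBtw (lo : Option α) (t : BT α) (hi : Option α) : Prop :=
  ∀ k ∈ t.keys, oLt lo k ∧ Lto k hi

@[simp] lemma forall_keys_node {P : α → Prop} {l r : BT α} {v : α} :
    (∀ k ∈ (node l v r).keys, P k) ↔
      (∀ k ∈ l.keys, P k) ∧ P v ∧ (∀ k ∈ r.keys, P k) := by
  simp only [keys, List.mem_append, List.mem_cons]
  constructor
  · intro h
    exact ⟨fun k hk => h k (Or.inl hk), h v (Or.inr (Or.inl rfl)),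
      fun k hk => h k (Or.inr (Or.inr hk))⟩
  · rintro ⟨h1, h2, h3⟩ k (hk | rfl | hk)
    · exact h1 k hk
    · exact h2
    · exact h3 k hk

@[simp] lemma forall_keys_leaf {P : α → Prop} :
    (∀ k ∈ (leaf : BT α).keys, P k) ↔ True := by
  simp [keys]

lemma KBtw_node {lo hi : Option α} {l r : BT α} {v : α} :
    KBtw lo (node l v r) hi ↔
      KBtw lo l hi ∧ (oLt lo v ∧ Lto v hi) ∧ KBtw lo r hi :=
  forall_keys_node

lemma KBtw_leaf {lo hi : Option α} : KBtw lo (leaf : BT α) hi := by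
  intro k hk; simp [keys] at hk

lemma KKBtw_none_none {t : BT α} : KBtw none t none := fun _ _ => ⟨trivial, trivial⟩

lemma KBtw_relax_hi {lo hi : Option α} {t : BT α} {v : α}
    (h : KBtw lo t (some v)) (h2 : Lto v hi) : KBtw lo t hi :=
  fun k hk => ⟨(h k hk).1, Lto_of_lt (h k hk).2 h2⟩

lemma KBtw_relax_lo {lo hi : Option α} {t : BT α} {v : α}
    (h : KBtw (some v) t hi) (h2 : oLt lo v) : KBtw lo t hi :=
  fun k hk => ⟨oLt_of_lt h2 (h k hk).1, (h k hk).2⟩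

/-- Membership in the keys after insertion. -/
lemma mem_keys_insertKey {t : BT α} {y k : α} :
    k ∈ (t.insertKey y).keys ↔ k = y ∨ k ∈ t.keys := by
  induction t with
  | leaf => simp [BT.insertKey, BT.keys]
  | node l v r ihl ihr =>
    rcases lt_trichotomy y v with h | h | h
    · simp only [BT.insertKey, if_pos h, BT.keys, List.mem_append, List.mem_cons, ihl]
      tauto
    · subst h
      simp only [BT.insertKey, lt_irrefl, if_neg (lt_irrefl y), ite_self, if_false,
        BT.keys, List.mem_append, List.mem_cons]
      constructor
      · tauto
      · rintro (rfl | h)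
        · tauto
        · tauto
    · simp only [BT.insertKey, if_neg (asymm h), if_pos h, BT.keys,
        List.mem_append, List.mem_cons, ihr]
      tauto

lemma mem_self_insertKey {t : BT α} {y : α} : y ∈ (t.insertKey y).keys := by
  simp [mem_keys_insertKey]

/-- Insertion preserves the BST property and bounds. -/
lemma insertKey_isBST_btw {t : BT α} {lo hi : Option α} {y : α}
    (hB : t.IsBST) (hBtw : KBtw lo t hi) (h1 : oLt lo y) (h2 : Lto y hi) :
    (t.insertKey y).IsBST ∧ KBtw lo (t.insertKey y) hi := by
  induction t generalizing lo hi with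
  | leaf =>
    constructor
    · simp [BT.insertKey, IsBST, keys]
    · simp only [BT.insertKey]
      rw [KBtw_node]
      exact ⟨KBtw_leaf, ⟨h1, h2⟩, KBtw_leaf⟩
  | node l v r ihl ihr =>
    rw [KBtw_node] at hBtw
    obtain ⟨hbl, ⟨hlv, hvh⟩, hbr⟩ := hBtw
    simp only [IsBST] at hB
    obtain ⟨hlt, hgt, hBl, hBr⟩ := hB
    rcases lt_trichotomy y v with h | h | h
    · have := ihl hBl (fun k hk => ⟨(hbl k hk).1, show Lto k (some v) from hlt k hk⟩)
        h1 (show Lto y (some v) from h)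
      simp only [BT.insertKey, if_pos h]
      constructor
      · simp only [IsBST]
        exact ⟨fun k hk => this.2 k hk |>.2, hgt, this.1, hBr⟩
      · rw [KBtw_node]
        exact ⟨fun k hk => ⟨(this.2 k hk).1, Lto_of_lt ((this.2 k hk).2) hvh⟩,
          ⟨hlv, hvh⟩, hbr⟩
    · subst h
      simp only [BT.insertKey, lt_self_iff_false, if_false]
      refine ⟨?_, ?_⟩
      · simp only [IsBST]; exact ⟨hlt, hgt, hBl, hBr⟩
      · rw [KBtw_node]; exact ⟨hbl, ⟨hlv, hvh⟩, hbr⟩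
    · have := ihr hBr (fun k hk => ⟨show oLt (some v) k from hgt k hk, (hbr k hk).2⟩)
        (show oLt (some v) y from h) h2
      simp only [BT.insertKey, if_neg (asymm h), if_pos h]
      constructor
      · simp only [IsBST]
        exact ⟨hlt, fun k hk => this.2 k hk |>.1, hBl, this.1⟩
      · rw [KBtw_node]
        exact ⟨hbl, ⟨hlv, hvh⟩,
          fun k hk => ⟨oLt_of_lt hlv ((this.2 k hk).1), (this.2 k hk).2⟩⟩
    
lemma insertKey_isBST {t : BT α} {y : α} (hB : t.IsBST) : (t.insertKey y).IsBST :=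
  (insertKey_isBST_btw hB KKBtw_none_none trivial trivial).1

lemma mem_left_of_lt {l r : BT α} {v x : α} (hB : (node l v r).IsBST)
    (hx : x ∈ (node l v r).keys) (h : x < v) : x ∈ l.keys := by
  simp only [IsBST] at hB
  simp only [keys, List.mem_append, List.mem_cons] at hx
  rcases hx with hx | rfl | hx
  · exact hx
  · exact absurd h (lt_irrefl x)
  · exact absurd (hB.2.1 x hx) (asymm h)

lemma mem_right_of_lt {l r : BT α} {v x : α} (hB : (node l v r).IsBST)
    (hx : x ∈ (node l v r).keys) (h : v < x) : x ∈ r.keys := by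
  simp only [IsBST] at hB
  simp only [keys, List.mem_append, List.mem_cons] at hx
  rcases hx with hx | rfl | hx
  · exact absurd (hB.1 x hx) (asymm h)
  · exact absurd h (lt_irrefl x)
  · exact hx

/-- Inserting another key does not change the depth of a present key. -/
lemma depthOf_insertKey {t : BT α} {x y : α} (hB : t.IsBST) (hx : x ∈ t.keys)
    (hxy : y ≠ x) : (t.insertKey y).depthOf x = t.depthOf x := by
  induction t with
  | leaf => simp [keys] at hx
  | node l v r ihl ihr =>
    have hB' := hB
    simp only [IsBST] at hB'
    rcases lt_trichotomy x v with hxv | rfl | hxv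
    · have hxl : x ∈ l.keys := mem_left_of_lt hB hx hxv
      rcases lt_trichotomy y v with h | h | h
      · simp only [BT.insertKey, if_pos h, BT.depthOf, if_pos hxv,
          ihl hB'.2.2.1 hxl]
      · subst h
        simp only [BT.insertKey, lt_self_iff_false, if_false]
      · simp only [BT.insertKey, if_neg (asymm h), if_pos h, BT.depthOf, if_pos hxv]
    · rcases lt_trichotomy y x with h | h | h
      · simp only [BT.insertKey, if_pos h, BT.depthOf, lt_self_iff_false, if_false]
      · exact absurd h hxy
      · simp only [BT.insertKey, if_neg (asymm h), if_pos h, BT.depthOf,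
          lt_self_iff_false, if_false]
    · have hxr : x ∈ r.keys := mem_right_of_lt hB hx hxv
      rcases lt_trichotomy y v with h | h | h
      · simp only [BT.insertKey, if_pos h, BT.depthOf, if_neg (asymm hxv), if_pos hxv]
      · subst h
        simp only [BT.insertKey, lt_self_iff_false, if_false]
      · simp only [BT.insertKey, if_neg (asymm h), if_pos h, BT.depthOf,
          if_neg (asymm hxv), if_pos hxv, ihr hB'.2.2.2 hxr]

/-- Lower bound of the hole described by a context list. -/
def loB : List (Ctx α) → Option α
  | [] => none
  | Ctx.inL _ _ :: cs => loB cs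
  | Ctx.inR _ v :: _ => some v

/-- Upper bound of the hole described by a context list. -/
def hiB : List (Ctx α) → Option α
  | [] => none
  | Ctx.inL v _ :: _ => some v
  | Ctx.inR _ _ :: cs => hiB cs

/-- Well-formedness of a context list. -/
def OkC : List (Ctx α) → Prop
  | [] => True
  | Ctx.inL v r :: cs =>
      oLt (loB cs) v ∧ Lto v (hiB cs) ∧ r.IsBST ∧ KBtw (some v) r (hiB cs) ∧ OkC cs
  | Ctx.inR l v :: cs =>
      oLt (loB cs) v ∧ Lto v (hiB cs) ∧ l.IsBST ∧ KBtw (loB cs) l (some v) ∧ OkC cs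

/-- Insert a key into the hanging subtree of a context step. -/
def insCtx (y : α) : Ctx α → Ctx α
  | Ctx.inL v r => Ctx.inL v (r.insertKey y)
  | Ctx.inR l v => Ctx.inR (l.insertKey y) v

lemma twoStepInduction {β : Type} {P : List β → Prop} (h0 : P []) (h1 : ∀ c, P [c])
    (h2 : ∀ c1 c2 cs, P cs → P (c1 :: c2 :: cs)) : ∀ cs, P cs
  | [] => h0
  | [c] => h1 c
  | c1 :: c2 :: cs => h2 c1 c2 cs (twoStepInduction h0 h1 h2 cs)

lemma descend_append {x : α} :
    ∀ (t : BT α) (acc : List (Ctx α)),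
      BT.descend t x acc = ((BT.descend t x []).1 ++ acc, (BT.descend t x []).2) := by
  intro t
  induction t with
  | leaf => intro acc; simp [BT.descend]
  | node l v r ihl ihr =>
    intro acc
    rcases lt_trichotomy x v with h | h | h
    · simp only [BT.descend, if_pos h]
      rw [ihl (Ctx.inL v r :: acc), ihl [Ctx.inL v r]]
      simp
    · subst h
      simp [BT.descend]
    · simp only [BT.descend, if_neg (asymm h), if_pos h]
      rw [ihr (Ctx.inR l v :: acc), ihr [Ctx.inR l v]]
      simp

lemma descend_rebuild {x : α} :
    ∀ (t : BT α) (acc : List (Ctx α)),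
      BT.rebuild (BT.descend t x acc).2 (BT.descend t x acc).1 = BT.rebuild t acc := by
  intro t
  induction t with
  | leaf => intro acc; simp [BT.descend]
  | node l v r ihl ihr =>
    intro acc
    rcases lt_trichotomy x v with h | h | h
    · simp only [BT.descend, if_pos h]
      rw [ihl (Ctx.inL v r :: acc)]
      rfl
    · subst h
      simp [BT.descend]
    · simp only [BT.descend, if_neg (asymm h), if_pos h]
      rw [ihr (Ctx.inR l v :: acc)]
      rfl

/-- The found subtree has the searched key at the root when present. -/
lemma descend_found {x : α} :
    ∀ (t : BT α) (acc : List (Ctx α)), t.IsBST → x ∈ t.keys →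
      ∃ a b, (BT.descend t x acc).2 = node a x b := by
  intro t
  induction t with
  | leaf => intro acc _ hx; simp [keys] at hx
  | node l v r ihl ihr =>
    intro acc hB hx
    rcases lt_trichotomy x v with h | h | h
    · simp only [BT.descend, if_pos h]
      exact ihl _ (by simp only [IsBST] at hB; exact hB.2.2.1) (mem_left_of_lt hB hx h)
    · subst h
      simp only [BT.descend, lt_self_iff_false, if_false]
      exact ⟨l, r, rfl⟩
    · simp only [BT.descend, if_neg (asymm h), if_pos h]
      exact ihr _ (by simp only [IsBST] at hB; exact hB.2.2.2) (mem_right_of_lt hB hx h)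

/-- Invariants carried by `descend`. -/
lemma descend_inv {x : α} :
    ∀ (t : BT α) (acc : List (Ctx α)), t.IsBST → KBtw (loB acc) t (hiB acc) → OkC acc →
      OkC (BT.descend t x acc).1 ∧ (BT.descend t x acc).2.IsBST ∧
        KBtw (loB (BT.descend t x acc).1) (BT.descend t x acc).2
          (hiB (BT.descend t x acc).1) := by
  intro t
  induction t with
  | leaf => intro acc hB hBtw hOk; simpa [BT.descend] using ⟨hOk, trivial, hBtw⟩
  | node l v r ihl ihr =>
    intro acc hB hBtw hOk
    have hB' := hB
    simp only [IsBST] at hB'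
    obtain ⟨hlt, hgt, hBl, hBr⟩ := hB'
    rw [KBtw_node] at hBtw
    obtain ⟨hbl, ⟨hlo, hhi⟩, hbr⟩ := hBtw
    rcases lt_trichotomy x v with h | h | h
    · simp only [BT.descend, if_pos h]
      refine ihl (Ctx.inL v r :: acc) hBl ?_ ?_
      · intro k hk
        exact ⟨(hbl k hk).1, show Lto k (some v) from hlt k hk⟩
      · exact ⟨hlo, hhi, hBr, fun k hk => ⟨show oLt (some v) k from hgt k hk,
          (hbr k hk).2⟩, hOk⟩
    · subst h
      simp only [BT.descend, lt_self_iff_false, if_false]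
      refine ⟨hOk, hB, ?_⟩
      rw [KBtw_node]
      exact ⟨hbl, ⟨hlo, hhi⟩, hbr⟩
    · simp only [BT.descend, if_neg (asymm h), if_pos h]
      refine ihr (Ctx.inR l v :: acc) hBr ?_ ?_
      · intro k hk
        exact ⟨show oLt (some v) k from hgt k hk, (hbr k hk).2⟩
      · exact ⟨hlo, hhi, hBl, fun k hk => ⟨(hbl k hk).1,
          show Lto k (some v) from hlt k hk⟩, hOk⟩

lemma keys_rebuild_congr : ∀ (cs : List (Ctx α)) (t t' : BT α), t.keys = t'.keys →
    (BT.rebuild t cs).keys = (BT.rebuild t' cs).keys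
  | [], _, _, h => h
  | Ctx.inL v r :: cs, _, _, h => keys_rebuild_congr cs _ _ (by simp [keys, h])
  | Ctx.inR l v :: cs, _, _, h => keys_rebuild_congr cs _ _ (by simp [keys, h])

lemma keys_splayLoop : ∀ (cs : List (Ctx α)) (t : BT α),
    (BT.splayLoop t cs).keys = (BT.rebuild t cs).keys := by
  refine twoStepInduction (fun t => by cases t <;> rfl) ?_ ?_
  · intro c t
    cases t with
    | leaf => cases c <;> rfl
    | node a x b => cases c <;> simp [BT.splayLoop, BT.rebuild, keys]
  · intro c1 c2 cs ih t
    cases t with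
    | leaf => cases c1 <;> cases c2 <;> rfl
    | node a x b =>
      cases c1 <;> cases c2 <;>
        (simp only [BT.splayLoop, BT.rebuild]; rw [ih];
         exact keys_rebuild_congr cs _ _ (by simp [keys]))

/-- Where a freshly inserted key sits relatively to a context step. -/
def CSide (y : α) : Ctx α → List (Ctx α) → Prop
  | Ctx.inL v r, cs2 => v < y ∧ Lto y (hiB cs2) ∧ y ∉ r.keys
  | Ctx.inR l v, cs2 => oLt (loB cs2) y ∧ y < v ∧ y ∉ l.keys

lemma descend_insertKey {x y : α} (hxy : y ≠ x) :
    ∀ (t : BT α) (acc : List (Ctx α)), t.IsBST → x ∈ t.keys → y ∉ t.keys →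
      oLt (loB acc) y → Lto y (hiB acc) →
      (BT.descend (t.insertKey y) x acc =
          ((BT.descend t x acc).1, (BT.descend t x acc).2.insertKey y) ∧
        oLt (loB (BT.descend t x acc).1) y ∧ Lto y (hiB (BT.descend t x acc).1) ∧
        y ∉ (BT.descend t x acc).2.keys) ∨
      (∃ cs1 c cs2, (BT.descend t x acc).1 = cs1 ++ c :: cs2 ∧
        BT.descend (t.insertKey y) x acc =
          (cs1 ++ insCtx y c :: cs2, (BT.descend t x acc).2) ∧
        CSide y c cs2) := by
  intro t
  induction t with
  | leaf => intro acc _ hx _ _ _; simp [keys] at hx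
  | node l v r ihl ihr =>
    intro acc hB hx hy hlo hhi
    have hB' := hB
    simp only [IsBST] at hB'
    obtain ⟨hlt, hgt, hBl, hBr⟩ := hB'
    have hyl : y ∉ l.keys := fun h => hy (by simp [keys]; tauto)
    have hyr : y ∉ r.keys := fun h => hy (by simp [keys]; tauto)
    have hyv : y ≠ v := fun h => hy (by simp [keys, h])
    rcases lt_trichotomy x v with h | h | h
    · have hxl : x ∈ l.keys := mem_left_of_lt hB hx h
      rcases lt_trichotomy y v with h2 | h2 | h2
      · have e1 : (node l v r).insertKey y = node (l.insertKey y) v r := by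
          simp only [BT.insertKey, if_pos h2]
        have e2 : BT.descend (node (l.insertKey y) v r) x acc
            = BT.descend (l.insertKey y) x (Ctx.inL v r :: acc) := by
          simp only [BT.descend, if_pos h]
        have e3 : BT.descend (node l v r) x acc
            = BT.descend l x (Ctx.inL v r :: acc) := by
          simp only [BT.descend, if_pos h]
        rw [e1, e2, e3]
        exact ihl (Ctx.inL v r :: acc) hBl hxl hyl hlo (show Lto y (some v) from h2)
      · exact absurd h2 hyv
      · have e1 : (node l v r).insertKey y = node l v (r.insertKey y) := by
          simp only [BT.insertKey, if_neg (asymm h2), if_pos h2]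
        have e2 : BT.descend (node l v (r.insertKey y)) x acc
            = BT.descend l x (Ctx.inL v (r.insertKey y) :: acc) := by
          simp only [BT.descend, if_pos h]
        have e3 : BT.descend (node l v r) x acc
            = BT.descend l x (Ctx.inL v r :: acc) := by
          simp only [BT.descend, if_pos h]
        rw [e1, e2, e3, descend_append l (Ctx.inL v (r.insertKey y) :: acc),
          descend_append l (Ctx.inL v r :: acc)]
        right
        exact ⟨(BT.descend l x []).1, Ctx.inL v r, acc, rfl, rfl, h2, hhi, hyr⟩
    · subst h
      have e3 : BT.descend (node l x r) x acc = (acc, node l x r) := by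
        simp only [BT.descend, lt_self_iff_false, if_false]
      rcases lt_trichotomy y x with h2 | h2 | h2
      · have e1 : (node l x r).insertKey y = node (l.insertKey y) x r := by
          simp only [BT.insertKey, if_pos h2]
        have e2 : BT.descend (node (l.insertKey y) x r) x acc
            = (acc, node (l.insertKey y) x r) := by
          simp only [BT.descend, lt_self_iff_false, if_false]
        rw [e1, e2, e3]
        exact Or.inl ⟨by rw [e1], hlo, hhi, hy⟩
      · exact absurd h2 hyv
      · have e1 : (node l x r).insertKey y = node l x (r.insertKey y) := by
          simp only [BT.insertKey, if_neg (asymm h2), if_pos h2]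
        have e2 : BT.descend (node l x (r.insertKey y)) x acc
            = (acc, node l x (r.insertKey y)) := by
          simp only [BT.descend, lt_self_iff_false, if_false]
        rw [e1, e2, e3]
        exact Or.inl ⟨by rw [e1], hlo, hhi, hy⟩
    · have hxr : x ∈ r.keys := mem_right_of_lt hB hx h
      rcases lt_trichotomy y v with h2 | h2 | h2
      · have e1 : (node l v r).insertKey y = node (l.insertKey y) v r := by
          simp only [BT.insertKey, if_pos h2]
        have e2 : BT.descend (node (l.insertKey y) v r) x acc
            = BT.descend r x (Ctx.inR (l.insertKey y) v :: acc) := by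
          simp only [BT.descend, if_neg (asymm h), if_pos h]
        have e3 : BT.descend (node l v r) x acc
            = BT.descend r x (Ctx.inR l v :: acc) := by
          simp only [BT.descend, if_neg (asymm h), if_pos h]
        rw [e1, e2, e3, descend_append r (Ctx.inR (l.insertKey y) v :: acc),
          descend_append r (Ctx.inR l v :: acc)]
        right
        exact ⟨(BT.descend r x []).1, Ctx.inR l v, acc, rfl, rfl, hlo, h2, hyl⟩
      · exact absurd h2 hyv
      · have e1 : (node l v r).insertKey y = node l v (r.insertKey y) := by
          simp only [BT.insertKey, if_neg (asymm h2), if_pos h2]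
        have e2 : BT.descend (node l v (r.insertKey y)) x acc
            = BT.descend (r.insertKey y) x (Ctx.inR l v :: acc) := by
          simp only [BT.descend, if_neg (asymm h), if_pos h]
        have e3 : BT.descend (node l v r) x acc
            = BT.descend r x (Ctx.inR l v :: acc) := by
          simp only [BT.descend, if_neg (asymm h), if_pos h]
        rw [e1, e2, e3]
        exact ihr (Ctx.inR l v :: acc) hBr hxr hyr (show oLt (some v) y from h2) hhi

section StepLemmas

variable {a b pl pr gl gr : BT α} {x p g y : α} {cs : List (Ctx α)}

lemma notMem_keys {l r : BT α} {v : α} {y : α}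
    (h : y ∉ l.keys) (h2 : y ≠ v) (h3 : y ∉ r.keys) : y ∉ (node l v r).keys := by
  simp only [keys, List.mem_append, List.mem_cons]
  rintro (hk | rfl | hk)
  · exact h hk
  · exact h2 rfl
  · exact h3 hk

lemma notMem_of_all_lt {t : BT α} (h : ∀ k ∈ t.keys, k < y) : y ∉ t.keys :=
  fun hk => absurd (h y hk) (lt_irrefl y)

lemma notMem_of_all_gt {t : BT α} (h : ∀ k ∈ t.keys, y < k) : y ∉ t.keys :=
  fun hk => absurd (h y hk) (lt_irrefl y)

lemma stepLL (hOk : OkC (Ctx.inL p pr :: Ctx.inL g gr :: cs))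
    (hB : (node a x b).IsBST)
    (hBtw : KBtw (loB (Ctx.inL p pr :: Ctx.inL g gr :: cs)) (node a x b)
      (hiB (Ctx.inL p pr :: Ctx.inL g gr :: cs))) :
    (node a x (node b p (node pr g gr))).IsBST ∧
      KBtw (loB cs) (node a x (node b p (node pr g gr))) (hiB cs) ∧ OkC cs := by
  obtain ⟨h1, h2, h3, h4, h5, h6, h7, h8, h9⟩ := hOk
  have h2' : p < g := h2
  simp only [IsBST] at hB
  obtain ⟨hax, hxb, hBa, hBb⟩ := hB
  simp only [loB, hiB] at hBtw
  rw [KBtw_node] at hBtw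
  obtain ⟨hba, ⟨hxlo, hxp⟩, hbb⟩ := hBtw
  have hxp' : x < p := hxp
  refine ⟨?_, ?_, h9⟩
  · simp only [IsBST, forall_keys_node]
    exact ⟨hax, ⟨hxb, hxp', fun k hk => lt_trans hxp' (h4 k hk).1,
        lt_trans hxp' h2', fun k hk => lt_trans (lt_trans hxp' h2') (h8 k hk).1⟩,
      hBa, fun k hk => (hbb k hk).2,
      ⟨fun k hk => (h4 k hk).1, h2', fun k hk => lt_trans h2' (h8 k hk).1⟩,
      hBb, fun k hk => (h4 k hk).2, fun k hk => (h8 k hk).1, h3, h7⟩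
  · rw [KBtw_node, KBtw_node, KBtw_node]
    refine ⟨fun k hk => ⟨(hba k hk).1, Lto_of_lt (lt_trans (hba k hk).2 h2') h6⟩,
      ⟨hxlo, Lto_of_lt (lt_trans hxp' h2') h6⟩,
      fun k hk => ⟨(hbb k hk).1, Lto_of_lt (lt_trans (hbb k hk).2 h2') h6⟩,
      ⟨h1, Lto_of_lt h2' h6⟩,
      fun k hk => ⟨oLt_of_lt h1 (h4 k hk).1, Lto_of_lt (h4 k hk).2 h6⟩,
      ⟨h5, h6⟩,
      fun k hk => ⟨oLt_of_lt h5 (h8 k hk).1, (h8 k hk).2⟩⟩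

lemma stepLL_y (hOk : OkC (Ctx.inL p pr :: Ctx.inL g gr :: cs))
    (hBtw : KBtw (loB (Ctx.inL p pr :: Ctx.inL g gr :: cs)) (node a x b)
      (hiB (Ctx.inL p pr :: Ctx.inL g gr :: cs)))
    (hylo : oLt (loB (Ctx.inL p pr :: Ctx.inL g gr :: cs)) y)
    (hyhi : Lto y (hiB (Ctx.inL p pr :: Ctx.inL g gr :: cs)))
    (hyt : y ∉ (node a x b).keys) :
    oLt (loB cs) y ∧ Lto y (hiB cs) ∧
      y ∉ (node a x (node b p (node pr g gr))).keys := by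
  obtain ⟨h1, h2, h3, h4, h5, h6, h7, h8, h9⟩ := hOk
  have h2' : p < g := h2
  have hyp : y < p := hyhi
  refine ⟨hylo, Lto_of_lt (lt_trans hyp h2') h6, ?_⟩
  simp only [keys, List.mem_append, List.mem_cons] at hyt ⊢
  push_neg at hyt ⊢
  refine ⟨hyt.1, hyt.2.1, hyt.2.2, ne_of_lt hyp, ?_, ne_of_lt (lt_trans hyp h2'), ?_⟩
  · exact fun hk => absurd (h4 y hk).1 (lt_asymm hyp)
  · exact fun hk => absurd (h8 y hk).1 (lt_asymm (lt_trans hyp h2'))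

lemma stepLR (hOk : OkC (Ctx.inL p pr :: Ctx.inR gl g :: cs))
    (hB : (node a x b).IsBST)
    (hBtw : KBtw (loB (Ctx.inL p pr :: Ctx.inR gl g :: cs)) (node a x b)
      (hiB (Ctx.inL p pr :: Ctx.inR gl g :: cs))) :
    (node (node gl g a) x (node b p pr)).IsBST ∧
      KBtw (loB cs) (node (node gl g a) x (node b p pr)) (hiB cs) ∧ OkC cs := by
  obtain ⟨h1, h2, h3, h4, h5, h6, h7, h8, h9⟩ := hOk
  have h1' : g < p := h1
  simp only [IsBST] at hB
  obtain ⟨hax, hxb, hBa, hBb⟩ := hB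
  simp only [loB, hiB] at hBtw
  rw [KBtw_node] at hBtw
  obtain ⟨hba, ⟨hxlo, hxp⟩, hbb⟩ := hBtw
  have hxp' : x < p := hxp
  have hgx : g < x := hxlo
  have hplo : oLt (loB cs) p := oLt_of_lt h5 h1'
  refine ⟨?_, ?_, h9⟩
  · simp only [IsBST, forall_keys_node]
    exact ⟨⟨fun k hk => lt_trans (h8 k hk).2 hgx, hgx, hax⟩,
      ⟨hxb, hxp', fun k hk => lt_trans hxp' (h4 k hk).1⟩,
      ⟨fun k hk => (h8 k hk).2, fun k hk => (hba k hk).1, h7, hBa⟩,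
      ⟨fun k hk => (hbb k hk).2, fun k hk => (h4 k hk).1, hBb, h3⟩⟩
  · rw [KBtw_node, KBtw_node, KBtw_node]
    refine ⟨⟨fun k hk => ⟨(h8 k hk).1, Lto_of_lt (h8 k hk).2 h6⟩, ⟨h5, h6⟩,
        fun k hk => ⟨oLt_of_lt h5 (hba k hk).1, Lto_of_lt (hba k hk).2 h2⟩⟩,
      ⟨oLt_of_lt h5 hxlo, Lto_of_lt hxp' h2⟩,
      ⟨fun k hk => ⟨oLt_of_lt h5 (hbb k hk).1, Lto_of_lt (hbb k hk).2 h2⟩,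
        ⟨hplo, h2⟩,
        fun k hk => ⟨oLt_of_lt hplo (h4 k hk).1, (h4 k hk).2⟩⟩⟩

lemma stepLR_y (hOk : OkC (Ctx.inL p pr :: Ctx.inR gl g :: cs))
    (hBtw : KBtw (loB (Ctx.inL p pr :: Ctx.inR gl g :: cs)) (node a x b)
      (hiB (Ctx.inL p pr :: Ctx.inR gl g :: cs)))
    (hylo : oLt (loB (Ctx.inL p pr :: Ctx.inR gl g :: cs)) y)
    (hyhi : Lto y (hiB (Ctx.inL p pr :: Ctx.inR gl g :: cs)))
    (hyt : y ∉ (node a x b).keys) :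
    oLt (loB cs) y ∧ Lto y (hiB cs) ∧
      y ∉ (node (node gl g a) x (node b p pr)).keys := by
  obtain ⟨h1, h2, h3, h4, h5, h6, h7, h8, h9⟩ := hOk
  have hgy : g < y := hylo
  have hyp : y < p := hyhi
  refine ⟨oLt_of_lt h5 hgy, Lto_of_lt hyp h2, ?_⟩
  simp only [keys, List.mem_append, List.mem_cons] at hyt ⊢
  push_neg at hyt ⊢
  refine ⟨⟨?_, ne_of_gt hgy, hyt.1⟩, hyt.2.1, hyt.2.2, ne_of_lt hyp, ?_⟩
  · exact fun hk => absurd (h8 y hk).2 (lt_asymm hgy)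
  · exact fun hk => absurd (h4 y hk).1 (lt_asymm hyp)

lemma stepRL (hOk : OkC (Ctx.inR pl p :: Ctx.inL g gr :: cs))
    (hB : (node a x b).IsBST)
    (hBtw : KBtw (loB (Ctx.inR pl p :: Ctx.inL g gr :: cs)) (node a x b)
      (hiB (Ctx.inR pl p :: Ctx.inL g gr :: cs))) :
    (node (node pl p a) x (node b g gr)).IsBST ∧
      KBtw (loB cs) (node (node pl p a) x (node b g gr)) (hiB cs) ∧ OkC cs := by
  obtain ⟨h1, h2, h3, h4, h5, h6, h7, h8, h9⟩ := hOk
  have h2' : p < g := h2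
  simp only [IsBST] at hB
  obtain ⟨hax, hxb, hBa, hBb⟩ := hB
  simp only [loB, hiB] at hBtw
  rw [KBtw_node] at hBtw
  obtain ⟨hba, ⟨hxlo, hxhi⟩, hbb⟩ := hBtw
  have hpx : p < x := hxlo
  have hxg : x < g := hxhi
  have hpHi : Lto p (hiB cs) := Lto_of_lt h2' h6
  refine ⟨?_, ?_, h9⟩
  · simp only [IsBST, forall_keys_node]
    exact ⟨⟨fun k hk => lt_trans (h4 k hk).2 hpx, hpx, hax⟩,
      ⟨hxb, hxg, fun k hk => lt_trans hxg (h8 k hk).1⟩,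
      ⟨fun k hk => (h4 k hk).2, fun k hk => (hba k hk).1, h3, hBa⟩,
      ⟨fun k hk => (hbb k hk).2, fun k hk => (h8 k hk).1, hBb, h7⟩⟩
  · rw [KBtw_node, KBtw_node, KBtw_node]
    refine ⟨⟨fun k hk => ⟨(h4 k hk).1, Lto_of_lt (h4 k hk).2 hpHi⟩, ⟨h1, hpHi⟩,
        fun k hk => ⟨oLt_of_lt h1 (hba k hk).1, Lto_of_lt (hba k hk).2 h6⟩⟩,
      ⟨oLt_of_lt h1 hpx, Lto_of_lt hxg h6⟩,
      ⟨fun k hk => ⟨oLt_of_lt h1 (hbb k hk).1, Lto_of_lt (hbb k hk).2 h6⟩,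
        ⟨h5, h6⟩,
        fun k hk => ⟨oLt_of_lt h5 (h8 k hk).1, (h8 k hk).2⟩⟩⟩

lemma stepRL_y (hOk : OkC (Ctx.inR pl p :: Ctx.inL g gr :: cs))
    (hBtw : KBtw (loB (Ctx.inR pl p :: Ctx.inL g gr :: cs)) (node a x b)
      (hiB (Ctx.inR pl p :: Ctx.inL g gr :: cs)))
    (hylo : oLt (loB (Ctx.inR pl p :: Ctx.inL g gr :: cs)) y)
    (hyhi : Lto y (hiB (Ctx.inR pl p :: Ctx.inL g gr :: cs)))
    (hyt : y ∉ (node a x b).keys) :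
    oLt (loB cs) y ∧ Lto y (hiB cs) ∧
      y ∉ (node (node pl p a) x (node b g gr)).keys := by
  obtain ⟨h1, h2, h3, h4, h5, h6, h7, h8, h9⟩ := hOk
  have hpy : p < y := hylo
  have hyg : y < g := hyhi
  refine ⟨oLt_of_lt h1 hpy, Lto_of_lt hyg h6, ?_⟩
  simp only [keys, List.mem_append, List.mem_cons] at hyt ⊢
  push_neg at hyt ⊢
  refine ⟨⟨?_, ne_of_gt hpy, hyt.1⟩, hyt.2.1, hyt.2.2, ne_of_lt hyg, ?_⟩
  · exact fun hk => absurd (h4 y hk).2 (lt_asymm hpy)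
  · exact fun hk => absurd (h8 y hk).1 (lt_asymm hyg)

lemma stepRR (hOk : OkC (Ctx.inR pl p :: Ctx.inR gl g :: cs))
    (hB : (node a x b).IsBST)
    (hBtw : KBtw (loB (Ctx.inR pl p :: Ctx.inR gl g :: cs)) (node a x b)
      (hiB (Ctx.inR pl p :: Ctx.inR gl g :: cs))) :
    (node (node (node gl g pl) p a) x b).IsBST ∧
      KBtw (loB cs) (node (node (node gl g pl) p a) x b) (hiB cs) ∧ OkC cs := by
  obtain ⟨h1, h2, h3, h4, h5, h6, h7, h8, h9⟩ := hOk
  have h1' : g < p := h1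
  simp only [IsBST] at hB
  obtain ⟨hax, hxb, hBa, hBb⟩ := hB
  simp only [loB, hiB] at hBtw
  rw [KBtw_node] at hBtw
  obtain ⟨hba, ⟨hxlo, hxhi⟩, hbb⟩ := hBtw
  have hpx : p < x := hxlo
  have hplo : oLt (loB cs) p := oLt_of_lt h5 h1'
  refine ⟨?_, ?_, h9⟩
  · simp only [IsBST, forall_keys_node]
    exact ⟨⟨⟨fun k hk => lt_trans (lt_trans (h8 k hk).2 h1') hpx,
        lt_trans h1' hpx, fun k hk => lt_trans (h4 k hk).2 hpx⟩, hpx, hax⟩,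
      hxb,
      ⟨⟨fun k hk => lt_trans (h8 k hk).2 h1', h1', fun k hk => (h4 k hk).2⟩,
        fun k hk => (hba k hk).1,
        ⟨fun k hk => (h8 k hk).2, fun k hk => (h4 k hk).1, h7, h3⟩, hBa⟩,
      hBb⟩
  · rw [KBtw_node, KBtw_node, KBtw_node]
    refine ⟨⟨⟨fun k hk => ⟨(h8 k hk).1, Lto_of_lt (lt_trans (h8 k hk).2 h1') h2⟩,
        ⟨h5, Lto_of_lt h1' h2⟩,
        fun k hk => ⟨oLt_of_lt h5 (h4 k hk).1, Lto_of_lt (h4 k hk).2 h2⟩⟩,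
        ⟨hplo, h2⟩,
        fun k hk => ⟨oLt_of_lt hplo (hba k hk).1, (hba k hk).2⟩⟩,
      ⟨oLt_of_lt hplo hpx, hxhi⟩,
      fun k hk => ⟨oLt_of_lt hplo (hbb k hk).1, (hbb k hk).2⟩⟩

lemma stepRR_y (hOk : OkC (Ctx.inR pl p :: Ctx.inR gl g :: cs))
    (hBtw : KBtw (loB (Ctx.inR pl p :: Ctx.inR gl g :: cs)) (node a x b)
      (hiB (Ctx.inR pl p :: Ctx.inR gl g :: cs)))
    (hylo : oLt (loB (Ctx.inR pl p :: Ctx.inR gl g :: cs)) y)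
    (hyhi : Lto y (hiB (Ctx.inR pl p :: Ctx.inR gl g :: cs)))
    (hyt : y ∉ (node a x b).keys) :
    oLt (loB cs) y ∧ Lto y (hiB cs) ∧
      y ∉ (node (node (node gl g pl) p a) x b).keys := by
  obtain ⟨h1, h2, h3, h4, h5, h6, h7, h8, h9⟩ := hOk
  have h1' : g < p := h1
  have hpy : p < y := hylo
  refine ⟨oLt_of_lt h5 (lt_trans h1' hpy), hyhi, ?_⟩
  simp only [keys, List.mem_append, List.mem_cons] at hyt ⊢
  push_neg at hyt ⊢
  refine ⟨⟨⟨?_, ne_of_gt (lt_trans h1' hpy), ?_⟩, ne_of_gt hpy, hyt.1⟩,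
    hyt.2.1, hyt.2.2⟩
  · exact fun hk => absurd (h8 y hk).2 (lt_asymm (lt_trans h1' hpy))
  · exact fun hk => absurd (h4 y hk).2 (lt_asymm hpy)

end StepLemmas

lemma splayLoop_nil {t : BT α} : BT.splayLoop t [] = t := by cases t <;> rfl

lemma splayLoop_insertKey {y : α} :
    ∀ (cs : List (Ctx α)), ∀ (a : BT α) (x : α) (b : BT α),
      OkC cs → (node a x b).IsBST → KBtw (loB cs) (node a x b) (hiB cs) →
      oLt (loB cs) y → Lto y (hiB cs) → y ∉ (node a x b).keys →
      BT.splayLoop ((node a x b).insertKey y) cs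
        = (BT.splayLoop (node a x b) cs).insertKey y := by
  refine twoStepInduction ?_ ?_ ?_
  · intro a x b _ _ _ _ _ _
    rw [splayLoop_nil, splayLoop_nil]
  · intro c a x b hOk hB hBtw hylo hyhi hyt
    cases c with
    | inL v r =>
      have hyv : y < v := hyhi
      rcases lt_trichotomy y x with hyx | rfl | hyx
      · have e1 : (node a x b).insertKey y = node (a.insertKey y) x b := by
          simp only [BT.insertKey, if_pos hyx]
        rw [e1]
        show node (a.insertKey y) x (node b v r)
          = (node a x (node b v r)).insertKey y
        simp only [BT.insertKey, if_pos hyx]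
      · exact absurd (by simp [keys]) hyt
      · have e1 : (node a x b).insertKey y = node a x (b.insertKey y) := by
          simp only [BT.insertKey, if_neg (asymm hyx), if_pos hyx]
        rw [e1]
        show node a x (node (b.insertKey y) v r)
          = (node a x (node b v r)).insertKey y
        simp only [BT.insertKey, if_neg (asymm hyx), if_pos hyx, if_pos hyv]
    | inR l v =>
      have hvy : v < y := hylo
      rcases lt_trichotomy y x with hyx | rfl | hyx
      · have e1 : (node a x b).insertKey y = node (a.insertKey y) x b := by
          simp only [BT.insertKey, if_pos hyx]
        rw [e1]
        show node (node l v (a.insertKey y)) x b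
          = (node (node l v a) x b).insertKey y
        simp only [BT.insertKey, if_pos hyx, if_neg (asymm hvy), if_pos hvy]
      · exact absurd (by simp [keys]) hyt
      · have e1 : (node a x b).insertKey y = node a x (b.insertKey y) := by
          simp only [BT.insertKey, if_neg (asymm hyx), if_pos hyx]
        rw [e1]
        show node (node l v a) x (b.insertKey y)
          = (node (node l v a) x b).insertKey y
        simp only [BT.insertKey, if_neg (asymm hyx), if_pos hyx]
  · intro c1 c2 cs ih a x b hOk hB hBtw hylo hyhi hyt
    cases c1 with
    | inL p pr =>
      cases c2 with
      | inL g gr =>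
        obtain ⟨hB1, hBtw1, hOk1⟩ := stepLL hOk hB hBtw
        obtain ⟨hylo1, hyhi1, hyt1⟩ := stepLL_y hOk hBtw hylo hyhi hyt
        have hyp : y < p := hyhi
        rcases lt_trichotomy y x with hyx | rfl | hyx
        · have e1 : (node a x b).insertKey y = node (a.insertKey y) x b := by
            simp only [BT.insertKey, if_pos hyx]
          rw [e1]
          show BT.splayLoop (node (a.insertKey y) x (node b p (node pr g gr))) cs
            = (BT.splayLoop (node a x (node b p (node pr g gr))) cs).insertKey y
          rw [show node (a.insertKey y) x (node b p (node pr g gr))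
              = (node a x (node b p (node pr g gr))).insertKey y from by
            simp only [BT.insertKey, if_pos hyx]]
          exact ih _ _ _ hOk1 hB1 hBtw1 hylo1 hyhi1 hyt1
        · exact absurd (by simp [keys]) hyt
        · have e1 : (node a x b).insertKey y = node a x (b.insertKey y) := by
            simp only [BT.insertKey, if_neg (asymm hyx), if_pos hyx]
          rw [e1]
          show BT.splayLoop (node a x (node (b.insertKey y) p (node pr g gr))) cs
            = (BT.splayLoop (node a x (node b p (node pr g gr))) cs).insertKey y
          rw [show node a x (node (b.insertKey y) p (node pr g gr))
              = (node a x (node b p (node pr g gr))).insertKey y from by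
            simp only [BT.insertKey, if_neg (asymm hyx), if_pos hyx, if_pos hyp]]
          exact ih _ _ _ hOk1 hB1 hBtw1 hylo1 hyhi1 hyt1
      | inR gl g =>
        obtain ⟨hB1, hBtw1, hOk1⟩ := stepLR hOk hB hBtw
        obtain ⟨hylo1, hyhi1, hyt1⟩ := stepLR_y hOk hBtw hylo hyhi hyt
        have hyp : y < p := hyhi
        have hgy : g < y := hylo
        rcases lt_trichotomy y x with hyx | rfl | hyx
        · have e1 : (node a x b).insertKey y = node (a.insertKey y) x b := by
            simp only [BT.insertKey, if_pos hyx]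
          rw [e1]
          show BT.splayLoop (node (node gl g (a.insertKey y)) x (node b p pr)) cs
            = (BT.splayLoop (node (node gl g a) x (node b p pr)) cs).insertKey y
          rw [show node (node gl g (a.insertKey y)) x (node b p pr)
              = (node (node gl g a) x (node b p pr)).insertKey y from by
            simp only [BT.insertKey, if_pos hyx, if_neg (asymm hgy), if_pos hgy]]
          exact ih _ _ _ hOk1 hB1 hBtw1 hylo1 hyhi1 hyt1
        · exact absurd (by simp [keys]) hyt
        · have e1 : (node a x b).insertKey y = node a x (b.insertKey y) := by
            simp only [BT.insertKey, if_neg (asymm hyx), if_pos hyx]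
          rw [e1]
          show BT.splayLoop (node (node gl g a) x (node (b.insertKey y) p pr)) cs
            = (BT.splayLoop (node (node gl g a) x (node b p pr)) cs).insertKey y
          rw [show node (node gl g a) x (node (b.insertKey y) p pr)
              = (node (node gl g a) x (node b p pr)).insertKey y from by
            simp only [BT.insertKey, if_neg (asymm hyx), if_pos hyx, if_pos hyp]]
          exact ih _ _ _ hOk1 hB1 hBtw1 hylo1 hyhi1 hyt1
    | inR pl p =>
      cases c2 with
      | inL g gr =>
        obtain ⟨hB1, hBtw1, hOk1⟩ := stepRL hOk hB hBtw
        obtain ⟨hylo1, hyhi1, hyt1⟩ := stepRL_y hOk hBtw hylo hyhi hyt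
        have hpy : p < y := hylo
        have hyg : y < g := hyhi
        rcases lt_trichotomy y x with hyx | rfl | hyx
        · have e1 : (node a x b).insertKey y = node (a.insertKey y) x b := by
            simp only [BT.insertKey, if_pos hyx]
          rw [e1]
          show BT.splayLoop (node (node pl p (a.insertKey y)) x (node b g gr)) cs
            = (BT.splayLoop (node (node pl p a) x (node b g gr)) cs).insertKey y
          rw [show node (node pl p (a.insertKey y)) x (node b g gr)
              = (node (node pl p a) x (node b g gr)).insertKey y from by
            simp only [BT.insertKey, if_pos hyx, if_neg (asymm hpy), if_pos hpy]]
          exact ih _ _ _ hOk1 hB1 hBtw1 hylo1 hyhi1 hyt1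
        · exact absurd (by simp [keys]) hyt
        · have e1 : (node a x b).insertKey y = node a x (b.insertKey y) := by
            simp only [BT.insertKey, if_neg (asymm hyx), if_pos hyx]
          rw [e1]
          show BT.splayLoop (node (node pl p a) x (node (b.insertKey y) g gr)) cs
            = (BT.splayLoop (node (node pl p a) x (node b g gr)) cs).insertKey y
          rw [show node (node pl p a) x (node (b.insertKey y) g gr)
              = (node (node pl p a) x (node b g gr)).insertKey y from by
            simp only [BT.insertKey, if_neg (asymm hyx), if_pos hyx, if_pos hyg]]
          exact ih _ _ _ hOk1 hB1 hBtw1 hylo1 hyhi1 hyt1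
      | inR gl g =>
        obtain ⟨hB1, hBtw1, hOk1⟩ := stepRR hOk hB hBtw
        obtain ⟨hylo1, hyhi1, hyt1⟩ := stepRR_y hOk hBtw hylo hyhi hyt
        have hpy : p < y := hylo
        rcases lt_trichotomy y x with hyx | rfl | hyx
        · have e1 : (node a x b).insertKey y = node (a.insertKey y) x b := by
            simp only [BT.insertKey, if_pos hyx]
          rw [e1]
          show BT.splayLoop (node (node (node gl g pl) p (a.insertKey y)) x b) cs
            = (BT.splayLoop (node (node (node gl g pl) p a) x b) cs).insertKey y
          rw [show node (node (node gl g pl) p (a.insertKey y)) x b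
              = (node (node (node gl g pl) p a) x b).insertKey y from by
            simp only [BT.insertKey, if_pos hyx, if_neg (asymm hpy), if_pos hpy]]
          exact ih _ _ _ hOk1 hB1 hBtw1 hylo1 hyhi1 hyt1
        · exact absurd (by simp [keys]) hyt
        · have e1 : (node a x b).insertKey y = node a x (b.insertKey y) := by
            simp only [BT.insertKey, if_neg (asymm hyx), if_pos hyx]
          rw [e1]
          show BT.splayLoop (node (node (node gl g pl) p a) x (b.insertKey y)) cs
            = (BT.splayLoop (node (node (node gl g pl) p a) x b) cs).insertKey y
          rw [show node (node (node gl g pl) p a) x (b.insertKey y)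
              = (node (node (node gl g pl) p a) x b).insertKey y from by
            simp only [BT.insertKey, if_neg (asymm hyx), if_pos hyx]]
          exact ih _ _ _ hOk1 hB1 hBtw1 hylo1 hyhi1 hyt1

lemma splayLoop_insertKey_ctx {y : α} :
    ∀ (cs : List (Ctx α)), ∀ (a : BT α) (x : α) (b : BT α)
      (cs1 : List (Ctx α)) (c : Ctx α) (cs2 : List (Ctx α)),
      cs = cs1 ++ c :: cs2 →
      OkC cs → (node a x b).IsBST → KBtw (loB cs) (node a x b) (hiB cs) →
      CSide y c cs2 →
      BT.splayLoop (node a x b) (cs1 ++ insCtx y c :: cs2)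
        = (BT.splayLoop (node a x b) cs).insertKey y := by
  refine twoStepInduction ?_ ?_ ?_
  · intro a x b cs1 c cs2 h
    exact absurd h (by simp)
  · intro c0 a x b cs1 c cs2 h hOk hB hBtw hcs
    rcases cs1 with _ | ⟨d, ds⟩
    · obtain ⟨rfl, rfl⟩ : c = c0 ∧ cs2 = [] := by
        simpa using h.symm
      cases c with
      | inL v r =>
        obtain ⟨hvy, -, hyr⟩ := hcs
        simp only [loB, hiB] at hBtw
        rw [KBtw_node] at hBtw
        obtain ⟨hba, ⟨-, hxv⟩, hbb⟩ := hBtw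
        have hxv' : x < v := hxv
        have hxy : x < y := lt_trans hxv' hvy
        show node a x (node b v (r.insertKey y))
          = (node a x (node b v r)).insertKey y
        simp only [BT.insertKey, if_neg (asymm hxy), if_pos hxy,
          if_neg (asymm hvy), if_pos hvy]
      | inR l v =>
        obtain ⟨-, hyv, hyl⟩ := hcs
        simp only [loB, hiB] at hBtw
        rw [KBtw_node] at hBtw
        obtain ⟨hba, ⟨hvx, -⟩, hbb⟩ := hBtw
        have hvx' : v < x := hvx
        have hyx : y < x := lt_trans hyv hvx'
        show node (node (l.insertKey y) v a) x b
          = (node (node l v a) x b).insertKey y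
        simp only [BT.insertKey, if_pos hyx, if_pos hyv]
    · exfalso
      have := congrArg List.length h
      simp at this
  · intro c1 c2 cs' ih a x b cs1 c cs2 h hOk hB hBtw hcs
    rcases cs1 with _ | ⟨d, ds⟩
    · -- c = c1
      obtain ⟨rfl, rfl⟩ : c1 = c ∧ cs2 = c2 :: cs' := by
        simp only [List.nil_append, List.cons.injEq] at h
        exact ⟨h.1, h.2.symm⟩
      cases c1 with
      | inL p pr =>
        obtain ⟨hpy, hyh2, hypr⟩ := hcs
        cases c2 with
        | inL g gr =>
          obtain ⟨hB1, hBtw1, hOk1⟩ := stepLL hOk hB hBtw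
          obtain ⟨h1, h2, h3, h4, h5, h6, h7, h8, h9⟩ := hOk
          have h2' : p < g := h2
          have hyg : y < g := hyh2
          simp only [loB, hiB] at hBtw
          rw [KBtw_node] at hBtw
          obtain ⟨hba, ⟨hxlo, hxp⟩, hbb⟩ := hBtw
          have hxy : x < y := lt_trans hxp hpy
          have hyt1 : y ∉ (node a x (node b p (node pr g gr))).keys :=
            notMem_keys (notMem_of_all_lt fun k hk => lt_trans (hba k hk).2 hpy)
              (ne_of_gt hxy)
              (notMem_keys (notMem_of_all_lt fun k hk => lt_trans (hbb k hk).2 hpy)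
                (ne_of_gt hpy)
                (notMem_keys hypr (ne_of_lt hyg)
                  (notMem_of_all_gt fun k hk => lt_trans hyg (h8 k hk).1)))
          show BT.splayLoop (node a x (node b p (node (pr.insertKey y) g gr))) cs'
            = (BT.splayLoop (node a x (node b p (node pr g gr))) cs').insertKey y
          rw [show node a x (node b p (node (pr.insertKey y) g gr))
              = (node a x (node b p (node pr g gr))).insertKey y from by
            simp only [BT.insertKey, if_neg (asymm hxy), if_pos hxy,
              if_neg (asymm hpy), if_pos hpy, if_pos hyg]]
          exact splayLoop_insertKey cs' _ _ _ hOk1 hB1 hBtw1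
            (oLt_of_lt h1 hpy) (Lto_of_lt hyg h6) hyt1
        | inR gl g =>
          obtain ⟨hB1, hBtw1, hOk1⟩ := stepLR hOk hB hBtw
          obtain ⟨h1, h2, h3, h4, h5, h6, h7, h8, h9⟩ := hOk
          have h1' : g < p := h1
          have hyhiC : Lto y (hiB cs') := hyh2
          simp only [loB, hiB] at hBtw
          rw [KBtw_node] at hBtw
          obtain ⟨hba, ⟨hxlo, hxp⟩, hbb⟩ := hBtw
          have hxy : x < y := lt_trans hxp hpy
          have hyt1 : y ∉ (node (node gl g a) x (node b p pr)).keys :=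
            notMem_keys
              (notMem_keys (notMem_of_all_lt fun k hk =>
                  lt_trans (h8 k hk).2 (lt_trans h1' hpy))
                (ne_of_gt (lt_trans h1' hpy))
                (notMem_of_all_lt fun k hk => lt_trans (hba k hk).2 hpy))
              (ne_of_gt hxy)
              (notMem_keys (notMem_of_all_lt fun k hk => lt_trans (hbb k hk).2 hpy)
                (ne_of_gt hpy) hypr)
          show BT.splayLoop (node (node gl g a) x (node b p (pr.insertKey y))) cs'
            = (BT.splayLoop (node (node gl g a) x (node b p pr)) cs').insertKey y
          rw [show node (node gl g a) x (node b p (pr.insertKey y))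
              = (node (node gl g a) x (node b p pr)).insertKey y from by
            simp only [BT.insertKey, if_neg (asymm hxy), if_pos hxy,
              if_neg (asymm hpy), if_pos hpy]]
          exact splayLoop_insertKey cs' _ _ _ hOk1 hB1 hBtw1
            (oLt_of_lt h5 (lt_trans h1' hpy)) hyhiC hyt1
      | inR pl p =>
        obtain ⟨hlo2, hyp, hypl⟩ := hcs
        cases c2 with
        | inL g gr =>
          obtain ⟨hB1, hBtw1, hOk1⟩ := stepRL hOk hB hBtw
          obtain ⟨h1, h2, h3, h4, h5, h6, h7, h8, h9⟩ := hOk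
          have h2' : p < g := h2
          have hloC : oLt (loB cs') y := hlo2
          simp only [loB, hiB] at hBtw
          rw [KBtw_node] at hBtw
          obtain ⟨hba, ⟨hpx, hxg⟩, hbb⟩ := hBtw
          have hyx : y < x := lt_trans hyp hpx
          have hyg : y < g := lt_trans hyp h2'
          have hxb : ∀ k ∈ b.keys, x < k := by
            simp only [IsBST] at hB; exact hB.2.1
          have hyt1 : y ∉ (node (node pl p a) x (node b g gr)).keys :=
            notMem_keys
              (notMem_keys hypl (ne_of_lt hyp)
                (notMem_of_all_gt fun k hk => lt_trans hyp (hba k hk).1))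
              (ne_of_lt hyx)
              (notMem_keys (notMem_of_all_gt fun k hk => lt_trans hyx (hxb k hk))
                (ne_of_lt hyg)
                (notMem_of_all_gt fun k hk => lt_trans hyg (h8 k hk).1))
          show BT.splayLoop (node (node (pl.insertKey y) p a) x (node b g gr)) cs'
            = (BT.splayLoop (node (node pl p a) x (node b g gr)) cs').insertKey y
          rw [show node (node (pl.insertKey y) p a) x (node b g gr)
              = (node (node pl p a) x (node b g gr)).insertKey y from by
            simp only [BT.insertKey, if_pos hyx, if_pos hyp]]
          exact splayLoop_insertKey cs' _ _ _ hOk1 hB1 hBtw1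
            hloC (Lto_of_lt hyg h6) hyt1
        | inR gl g =>
          obtain ⟨hB1, hBtw1, hOk1⟩ := stepRR hOk hB hBtw
          obtain ⟨h1, h2, h3, h4, h5, h6, h7, h8, h9⟩ := hOk
          have h1' : g < p := h1
          have hgy : g < y := hlo2
          simp only [loB, hiB] at hBtw
          rw [KBtw_node] at hBtw
          obtain ⟨hba, ⟨hpx, hxhi⟩, hbb⟩ := hBtw
          have hyx : y < x := lt_trans hyp hpx
          have hxb : ∀ k ∈ b.keys, x < k := by
            simp only [IsBST] at hB; exact hB.2.1
          have hyt1 : y ∉ (node (node (node gl g pl) p a) x b).keys :=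
            notMem_keys
              (notMem_keys
                (notMem_keys (notMem_of_all_lt fun k hk => lt_trans (h8 k hk).2 hgy)
                  (ne_of_gt hgy) hypl)
                (ne_of_lt hyp)
                (notMem_of_all_gt fun k hk => lt_trans hyp (hba k hk).1))
              (ne_of_lt hyx)
              (notMem_of_all_gt fun k hk => lt_trans hyx (hxb k hk))
          show BT.splayLoop (node (node (node gl g (pl.insertKey y)) p a) x b) cs'
            = (BT.splayLoop (node (node (node gl g pl) p a) x b) cs').insertKey y
          rw [show node (node (node gl g (pl.insertKey y)) p a) x b
              = (node (node (node gl g pl) p a) x b).insertKey y from by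
            simp only [BT.insertKey, if_pos hyx, if_pos hyp,
              if_neg (asymm hgy), if_pos hgy]]
          exact splayLoop_insertKey cs' _ _ _ hOk1 hB1 hBtw1
            (oLt_of_lt h5 hgy) (Lto_of_lt hyp h2) hyt1
    · rcases ds with _ | ⟨d2, ds2⟩
      · -- c = c2
        obtain ⟨rfl, rfl, rfl⟩ : c1 = d ∧ c2 = c ∧ cs' = cs2 := by
          simp only [List.cons_append, List.nil_append, List.cons.injEq] at h
          exact ⟨h.1, h.2.1, h.2.2⟩
        cases c1 with
        | inL p pr =>
          cases c2 with
          | inL g gr =>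
            obtain ⟨hgy, hyh2, hygr⟩ := hcs
            obtain ⟨hB1, hBtw1, hOk1⟩ := stepLL hOk hB hBtw
            obtain ⟨h1, h2, h3, h4, h5, h6, h7, h8, h9⟩ := hOk
            have h2' : p < g := h2
            simp only [loB, hiB] at hBtw
            rw [KBtw_node] at hBtw
            obtain ⟨hba, ⟨hxlo, hxp⟩, hbb⟩ := hBtw
            have hpy : p < y := lt_trans h2' hgy
            have hxy : x < y := lt_trans hxp hpy
            have hyt1 : y ∉ (node a x (node b p (node pr g gr))).keys :=
              notMem_keys (notMem_of_all_lt fun k hk => lt_trans (hba k hk).2 hpy)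
                (ne_of_gt hxy)
                (notMem_keys (notMem_of_all_lt fun k hk => lt_trans (hbb k hk).2 hpy)
                  (ne_of_gt hpy)
                  (notMem_keys
                    (notMem_of_all_lt fun k hk => lt_trans (h4 k hk).2 hgy)
                    (ne_of_gt hgy) hygr))
            show BT.splayLoop (node a x (node b p (node pr g (gr.insertKey y)))) cs'
              = (BT.splayLoop (node a x (node b p (node pr g gr))) cs').insertKey y
            rw [show node a x (node b p (node pr g (gr.insertKey y)))
                = (node a x (node b p (node pr g gr))).insertKey y from by
              simp only [BT.insertKey, if_neg (asymm hxy), if_pos hxy,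
                if_neg (asymm hpy), if_pos hpy, if_neg (asymm hgy), if_pos hgy]]
            exact splayLoop_insertKey cs' _ _ _ hOk1 hB1 hBtw1
              (oLt_of_lt h5 hgy) hyh2 hyt1
          | inR gl g =>
            obtain ⟨hloC, hyg, hygl⟩ := hcs
            obtain ⟨hB1, hBtw1, hOk1⟩ := stepLR hOk hB hBtw
            obtain ⟨h1, h2, h3, h4, h5, h6, h7, h8, h9⟩ := hOk
            have h1' : g < p := h1
            simp only [loB, hiB] at hBtw
            rw [KBtw_node] at hBtw
            obtain ⟨hba, ⟨hgx, hxp⟩, hbb⟩ := hBtw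
            have hyx : y < x := lt_trans hyg hgx
            have hyp : y < p := lt_trans hyg h1'
            have hxb : ∀ k ∈ b.keys, x < k := by
              simp only [IsBST] at hB; exact hB.2.1
            have hyt1 : y ∉ (node (node gl g a) x (node b p pr)).keys :=
              notMem_keys
                (notMem_keys hygl (ne_of_lt hyg)
                  (notMem_of_all_gt fun k hk => lt_trans hyg (hba k hk).1))
                (ne_of_lt hyx)
                (notMem_keys (notMem_of_all_gt fun k hk => lt_trans hyx (hxb k hk))
                  (ne_of_lt hyp)
                  (notMem_of_all_gt fun k hk => lt_trans hyp (h4 k hk).1))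
            show BT.splayLoop (node (node (gl.insertKey y) g a) x (node b p pr)) cs'
              = (BT.splayLoop (node (node gl g a) x (node b p pr)) cs').insertKey y
            rw [show node (node (gl.insertKey y) g a) x (node b p pr)
                = (node (node gl g a) x (node b p pr)).insertKey y from by
              simp only [BT.insertKey, if_pos hyx, if_pos hyg]]
            exact splayLoop_insertKey cs' _ _ _ hOk1 hB1 hBtw1
              hloC (Lto_of_lt hyp h2) hyt1
        | inR pl p =>
          cases c2 with
          | inL g gr =>
            obtain ⟨hgy, hyh2, hygr⟩ := hcs
            obtain ⟨hB1, hBtw1, hOk1⟩ := stepRL hOk hB hBtw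
            obtain ⟨h1, h2, h3, h4, h5, h6, h7, h8, h9⟩ := hOk
            have h2' : p < g := h2
            simp only [loB, hiB] at hBtw
            rw [KBtw_node] at hBtw
            obtain ⟨hba, ⟨hpx, hxg⟩, hbb⟩ := hBtw
            have hxy : x < y := lt_trans (show x < g from hxg) hgy
            have hyt1 : y ∉ (node (node pl p a) x (node b g gr)).keys :=
              notMem_keys
                (notMem_keys
                  (notMem_of_all_lt fun k hk =>
                    lt_trans (h4 k hk).2 (lt_trans h2' hgy))
                  (ne_of_gt (lt_trans h2' hgy))
                  (notMem_of_all_lt fun k hk => lt_trans (hba k hk).2 hgy))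
                (ne_of_gt hxy)
                (notMem_keys (notMem_of_all_lt fun k hk => lt_trans (hbb k hk).2 hgy)
                  (ne_of_gt hgy) hygr)
            show BT.splayLoop (node (node pl p a) x (node b g (gr.insertKey y))) cs'
              = (BT.splayLoop (node (node pl p a) x (node b g gr)) cs').insertKey y
            rw [show node (node pl p a) x (node b g (gr.insertKey y))
                = (node (node pl p a) x (node b g gr)).insertKey y from by
              simp only [BT.insertKey, if_neg (asymm hxy), if_pos hxy,
                if_neg (asymm hgy), if_pos hgy]]
            exact splayLoop_insertKey cs' _ _ _ hOk1 hB1 hBtw1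
              (oLt_of_lt h5 hgy) hyh2 hyt1
          | inR gl g =>
            obtain ⟨hloC, hyg, hygl⟩ := hcs
            obtain ⟨hB1, hBtw1, hOk1⟩ := stepRR hOk hB hBtw
            obtain ⟨h1, h2, h3, h4, h5, h6, h7, h8, h9⟩ := hOk
            have h1' : g < p := h1
            simp only [loB, hiB] at hBtw
            rw [KBtw_node] at hBtw
            obtain ⟨hba, ⟨hpx, hxhi⟩, hbb⟩ := hBtw
            have hyp : y < p := lt_trans hyg h1'
            have hyx : y < x := lt_trans hyp hpx
            have hxb : ∀ k ∈ b.keys, x < k := by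
              simp only [IsBST] at hB; exact hB.2.1
            have hyt1 : y ∉ (node (node (node gl g pl) p a) x b).keys :=
              notMem_keys
                (notMem_keys
                  (notMem_keys hygl (ne_of_lt hyg)
                    (notMem_of_all_gt fun k hk => lt_trans hyg (h4 k hk).1))
                  (ne_of_lt hyp)
                  (notMem_of_all_gt fun k hk => lt_trans hyp (hba k hk).1))
                (ne_of_lt hyx)
                (notMem_of_all_gt fun k hk => lt_trans hyx (hxb k hk))
            show BT.splayLoop (node (node (node (gl.insertKey y) g pl) p a) x b) cs'
              = (BT.splayLoop (node (node (node gl g pl) p a) x b) cs').insertKey y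
            rw [show node (node (node (gl.insertKey y) g pl) p a) x b
                = (node (node (node gl g pl) p a) x b).insertKey y from by
              simp only [BT.insertKey, if_pos hyx, if_pos hyp, if_pos hyg]]
            exact splayLoop_insertKey cs' _ _ _ hOk1 hB1 hBtw1
              hloC (Lto_of_lt hyg (Lto_of_lt h1' h2)) hyt1
      · -- deep
        obtain ⟨rfl, rfl, rfl⟩ : c1 = d ∧ c2 = d2 ∧ cs' = ds2 ++ c :: cs2 := by
          simp only [List.cons_append, List.cons.injEq] at h
          exact ⟨h.1, h.2.1, h.2.2⟩
        cases c1 with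
        | inL p pr =>
          cases c2 with
          | inL g gr =>
            obtain ⟨hB1, hBtw1, hOk1⟩ := stepLL hOk hB hBtw
            exact ih _ _ _ ds2 c cs2 rfl hOk1 hB1 hBtw1 hcs
          | inR gl g =>
            obtain ⟨hB1, hBtw1, hOk1⟩ := stepLR hOk hB hBtw
            exact ih _ _ _ ds2 c cs2 rfl hOk1 hB1 hBtw1 hcs
        | inR pl p =>
          cases c2 with
          | inL g gr =>
            obtain ⟨hB1, hBtw1, hOk1⟩ := stepRL hOk hB hBtw
            exact ih _ _ _ ds2 c cs2 rfl hOk1 hB1 hBtw1 hcs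
          | inR gl g =>
            obtain ⟨hB1, hBtw1, hOk1⟩ := stepRR hOk hB hBtw
            exact ih _ _ _ ds2 c cs2 rfl hOk1 hB1 hBtw1 hcs

lemma splayLoop_isBST :
    ∀ (cs : List (Ctx α)) (a : BT α) (x : α) (b : BT α),
      OkC cs → (node a x b).IsBST → KBtw (loB cs) (node a x b) (hiB cs) →
      (BT.splayLoop (node a x b) cs).IsBST := by
  refine twoStepInduction ?_ ?_ ?_
  · intro a x b _ hB _
    rw [splayLoop_nil]; exact hB
  · intro c a x b hOk hB hBtw
    simp only [IsBST] at hB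
    obtain ⟨hax, hxb, hBa, hBb⟩ := hB
    cases c with
    | inL v r =>
      obtain ⟨k1, k2, k3, k4, k5⟩ := hOk
      simp only [loB, hiB] at hBtw
      rw [KBtw_node] at hBtw
      obtain ⟨hba, ⟨hxlo, hxv⟩, hbb⟩ := hBtw
      have hxv' : x < v := hxv
      show (node a x (node b v r)).IsBST
      simp only [IsBST, forall_keys_node]
      exact ⟨hax, ⟨hxb, hxv', fun k hk => lt_trans hxv' (k4 k hk).1⟩, hBa,
        fun k hk => (hbb k hk).2, fun k hk => (k4 k hk).1, hBb, k3⟩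
    | inR l v =>
      obtain ⟨k1, k2, k3, k4, k5⟩ := hOk
      simp only [loB, hiB] at hBtw
      rw [KBtw_node] at hBtw
      obtain ⟨hba, ⟨hvx, hxhi⟩, hbb⟩ := hBtw
      have hvx' : v < x := hvx
      show (node (node l v a) x b).IsBST
      simp only [IsBST, forall_keys_node]
      exact ⟨⟨fun k hk => lt_trans (k4 k hk).2 hvx', hvx', hax⟩, hxb,
        ⟨fun k hk => (k4 k hk).2, fun k hk => (hba k hk).1, k3, hBa⟩, hBb⟩
  · intro c1 c2 cs ih a x b hOk hB hBtw
    cases c1 with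
    | inL p pr =>
      cases c2 with
      | inL g gr =>
        obtain ⟨hB1, hBtw1, hOk1⟩ := stepLL hOk hB hBtw
        exact ih _ _ _ hOk1 hB1 hBtw1
      | inR gl g =>
        obtain ⟨hB1, hBtw1, hOk1⟩ := stepLR hOk hB hBtw
        exact ih _ _ _ hOk1 hB1 hBtw1
    | inR pl p =>
      cases c2 with
      | inL g gr =>
        obtain ⟨hB1, hBtw1, hOk1⟩ := stepRL hOk hB hBtw
        exact ih _ _ _ hOk1 hB1 hBtw1
      | inR gl g =>
        obtain ⟨hB1, hBtw1, hOk1⟩ := stepRR hOk hB hBtw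
        exact ih _ _ _ hOk1 hB1 hBtw1

lemma mem_keys_splay {t : BT α} {x k : α} :
    k ∈ (BT.splay x t).keys ↔ k ∈ t.keys := by
  unfold BT.splay
  rcases hd : BT.descend t x [] with ⟨cs, f⟩
  cases f with
  | leaf => rfl
  | node fa fx fb =>
    show k ∈ (BT.splayLoop (node fa fx fb) cs).keys ↔ k ∈ t.keys
    rw [keys_splayLoop]
    have := descend_rebuild (x := x) t []
    rw [hd] at this
    rw [show (BT.rebuild t []) = t from rfl] at this
    rw [this]

lemma splay_isBST {t : BT α} {x : α} (hB : t.IsBST) : (BT.splay x t).IsBST := by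
  unfold BT.splay
  have hinv := descend_inv (x := x) t [] hB KKBtw_none_none trivial
  rcases hd : BT.descend t x [] with ⟨cs, f⟩
  rw [hd] at hinv
  cases f with
  | leaf => exact hB
  | node fa fx fb =>
    show (BT.splayLoop (node fa fx fb) cs).IsBST
    exact splayLoop_isBST cs _ _ _ hinv.1 hinv.2.1 hinv.2.2

lemma splay_insertKey {t : BT α} {x y : α} (hB : t.IsBST) (hx : x ∈ t.keys)
    (hy : y ∉ t.keys) :
    BT.splay x (t.insertKey y) = (BT.splay x t).insertKey y := by
  have hxy : y ≠ x := fun h => hy (h ▸ hx)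
  have hfound := descend_found (x := x) t [] hB hx
  have hinv := descend_inv (x := x) t [] hB KKBtw_none_none trivial
  have hdi := descend_insertKey hxy t [] hB hx hy trivial trivial
  rcases hd : BT.descend t x [] with ⟨cs, f⟩
  rw [hd] at hfound hinv hdi
  obtain ⟨a, b, hf⟩ := hfound
  simp only at hf
  subst hf
  obtain ⟨hOk, hBf, hKB⟩ := hinv
  rcases hdi with ⟨he, hylo, hyhi, hyf⟩ | ⟨cs1, c, cs2, hceq, he, hside⟩
  · simp only at he hylo hyhi hyf
    unfold BT.splay
    rw [he, hd]
    rcases lt_trichotomy y x with hyx | rfl | hyx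
    · have e1 : (node a x b).insertKey y = node (a.insertKey y) x b := by
        simp only [BT.insertKey, if_pos hyx]
      rw [e1]
      show BT.splayLoop (node (a.insertKey y) x b) cs
        = (BT.splayLoop (node a x b) cs).insertKey y
      rw [← e1]
      exact splayLoop_insertKey cs a x b hOk hBf hKB hylo hyhi hyf
    · exact absurd (by simp [keys]) hyf
    · have e1 : (node a x b).insertKey y = node a x (b.insertKey y) := by
        simp only [BT.insertKey, if_neg (asymm hyx), if_pos hyx]
      rw [e1]
      show BT.splayLoop (node a x (b.insertKey y)) cs
        = (BT.splayLoop (node a x b) cs).insertKey y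
      rw [← e1]
      exact splayLoop_insertKey cs a x b hOk hBf hKB hylo hyhi hyf
  · simp only at he hceq
    unfold BT.splay
    rw [he, hd]
    show BT.splayLoop (node a x b) (cs1 ++ insCtx y c :: cs2)
      = (BT.splayLoop (node a x b) cs).insertKey y
    exact splayLoop_insertKey_ctx cs a x b cs1 c cs2 hceq hOk hBf hKB hside

lemma splay_foldl_insertKey {x : α} :
    ∀ (ys : List α) (w : BT α), w.IsBST → x ∈ w.keys →
      (∀ y ∈ ys, y ∉ w.keys) → ys.Nodup →
      BT.splay x (ys.foldl BT.insertKey w) = ys.foldl BT.insertKey (BT.splay x w) := by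
  intro ys
  induction ys with
  | nil => intro w _ _ _ _; rfl
  | cons y ys ih =>
    intro w hB hx hfresh hnd
    simp only [List.foldl_cons]
    rw [ih (w.insertKey y) (insertKey_isBST hB)
        (mem_keys_insertKey.mpr (Or.inr hx))
        (fun z hz hmem => by
          rcases mem_keys_insertKey.mp hmem with rfl | hzw
          · exact (List.nodup_cons.mp hnd).1 hz
          · exact hfresh z (List.mem_cons_of_mem _ hz) hzw)
        (List.nodup_cons.mp hnd).2,
      splay_insertKey hB hx (hfresh y List.mem_cons_self)]

lemma depthOf_foldl_insertKey {x : α} :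
    ∀ (ys : List α) (w : BT α), w.IsBST → x ∈ w.keys → x ∉ ys →
      (ys.foldl BT.insertKey w).depthOf x = w.depthOf x := by
  intro ys
  induction ys with
  | nil => intro w _ _ _; rfl
  | cons y ys ih =>
    intro w hB hx hxys
    simp only [List.foldl_cons]
    rw [ih (w.insertKey y) (insertKey_isBST hB)
        (mem_keys_insertKey.mpr (Or.inr hx))
        (fun h => hxys (List.mem_cons_of_mem _ h)),
      depthOf_insertKey hB hx (fun h => hxys (h ▸ List.mem_cons_self))]

lemma insertSplay_eq_splayCost :
    ∀ (π : List α) (t : BT α), t.IsBST → π.Nodup → (∀ p ∈ π, p ∉ t.keys) →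
      insertSplayCost t π = splayCost (π.foldl BT.insertKey t) π := by
  intro π
  induction π with
  | nil => intro t _ _ _; rfl
  | cons x xs ih =>
    intro t hB hnd hfresh
    have hxxs : x ∉ xs := (List.nodup_cons.mp hnd).1
    have hndxs : xs.Nodup := (List.nodup_cons.mp hnd).2
    have hB1 : (t.insertKey x).IsBST := insertKey_isBST hB
    have hx1 : x ∈ (t.insertKey x).keys := mem_self_insertKey
    have hfresh1 : ∀ y ∈ xs, y ∉ (t.insertKey x).keys := by
      intro y hy hmem
      rcases mem_keys_insertKey.mp hmem with rfl | hzw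
      · exact hxxs hy
      · exact hfresh y (List.mem_cons_of_mem _ hy) hzw
    simp only [insertSplayCost, splayCost, List.foldl_cons]
    rw [depthOf_foldl_insertKey xs (t.insertKey x) hB1 hx1 hxxs,
      splay_foldl_insertKey xs (t.insertKey x) hB1 hx1 hfresh1 hndxs,
      ih (BT.splay x (t.insertKey x)) (splay_isBST hB1) hndxs
        (fun y hy hmem => hfresh1 y hy (mem_keys_splay.mp hmem))]

end SplayProof

/-- Insertion splaying a sequence of distinct keys starting from the empty
tree costs exactly as much as splaying the same sequence starting from its
insertion tree `bstOf π`. -/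
theorem insertSplayCost_eq_splayCost_bstOf {α : Type} [LinearOrder α]
    (π : List α) (hnd : π.Nodup) :
    insertSplayCost BT.leaf π = splayCost (bstOf π) π :=
  insertSplay_eq_splayCost π BT.leaf trivial hnd (fun p _ h => by simp [BT.keys] at h)
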